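/- Let d ≥ 2 be an integer and let μ : [0,∞) → ℝ be continuous with |μ(e)| ≤ C(1+e)^{-n₁} for some n₁ > d/2 + 1. Define φ(u) := ∫_{ℝ^{d-1}} μ(u² + |w|²) dw and, for z ∈ ℂ with Im z < 0, H(z) := ∫_ℝ φ(u)/(z − u) du. Then for every k ∈ ℝ^d with k ≠ 0 and every λ ∈ ℂ with Re λ > 0 (so that Im((−iλ ± |k|²)/(2|k|)) = −Re λ/(2|k|) < 0), one has the identity i ∫_{ℝ^d} (μ(|p|²) − μ(|k−p|²)) / (λ − 2i k·p + i|k|²) dp = (1/(2|k|)) [ H((−iλ + |k|²)/(2|k|)) − H((−iλ − |k|²)/(2|k|)) ]. -/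

import Mathlib

open MeasureTheory
open scoped RealInnerProductSpace

/-- The marginal of `μ(|p|²)` over a hyperplane in `ℝ^d`. -/
noncomputable def phiMarg (d : ℕ) (μ : ℝ → ℝ) (u : ℝ) : ℝ :=
  ∫ w : EuclideanSpace ℝ (Fin (d - 1)), μ (u ^ 2 + ‖w‖ ^ 2)

/-- The Cauchy integral `H(z) = ∫_ℝ φ(u)/(z − u) du`. -/
noncomputable def Hcauchy (φ : ℝ → ℝ) (z : ℂ) : ℂ :=
  ∫ u : ℝ, (φ u : ℂ) / (z - (u : ℂ))

lemma key (m : ℕ) (μ : ℝ → ℝ) (C n₁ : ℝ) (hcont : Continuous μ)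
    (hn₁ : ((m+1 : ℕ) : ℝ) / 2 + 1 < n₁)
    (hdecay : ∀ e : ℝ, 0 ≤ e → |μ e| ≤ C * (1 + e) ^ (-n₁))
    (k : EuclideanSpace ℝ (Fin (m+1))) (hk : k ≠ 0)
    (g : ℝ → ℂ) (hg : Measurable g) (M : ℝ) (hM : ∀ t, ‖g t‖ ≤ M) :
    Integrable (fun p : EuclideanSpace ℝ (Fin (m+1)) => (μ (‖p‖^2) : ℂ) * g ⟪k, p⟫) ∧
    (∫ p : EuclideanSpace ℝ (Fin (m+1)), (μ (‖p‖^2) : ℂ) * g ⟪k, p⟫)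
      = ∫ u : ℝ, (phiMarg (m+1) μ u : ℂ) * g (‖k‖ * u) := by
  -- orthonormal basis with b 0 = ‖k‖⁻¹ • k
  have hknorm : ‖k‖ ≠ 0 := norm_ne_zero_iff.2 hk
  have hunit : ‖‖k‖⁻¹ • k‖ = 1 := by
    rw [norm_smul, norm_inv, norm_norm, inv_mul_cancel₀ hknorm]
  have hon : Orthonormal ℝ (({0} : Set (Fin (m+1))).restrict
      (fun _ : Fin (m+1) => ‖k‖⁻¹ • k)) := by
    constructor
    · intro i; exact hunit
    · intro i j hij
      exact absurd (Subtype.ext (by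
        have hi := i.2; have hj := j.2
        simp only [Set.mem_singleton_iff] at hi hj
        rw [hi, hj])) hij
  obtain ⟨b, hb⟩ := Orthonormal.exists_orthonormalBasis_extension_of_card_eq
    (by simp) hon
  have hb0 : b 0 = ‖k‖⁻¹ • k := hb 0 rfl
  -- the measurable equivalence
  let e₁ : (ℝ × EuclideanSpace ℝ (Fin m)) ≃ᵐ (ℝ × (Fin m → ℝ)) :=
    (MeasurableEquiv.refl ℝ).prodCongr (MeasurableEquiv.toLp 2 (Fin m → ℝ)).symm
  let e₂ : (ℝ × (Fin m → ℝ)) ≃ᵐ (Fin (m+1) → ℝ) :=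
    (MeasurableEquiv.piFinSuccAbove (fun _ : Fin (m+1) => ℝ) 0).symm
  let e₃ : (Fin (m+1) → ℝ) ≃ᵐ EuclideanSpace ℝ (Fin (m+1)) :=
    (MeasurableEquiv.toLp 2 (Fin (m+1) → ℝ))
  let e₄ : EuclideanSpace ℝ (Fin (m+1)) ≃ᵐ EuclideanSpace ℝ (Fin (m+1)) :=
    b.repr.symm.toHomeomorph.toMeasurableEquiv
  let F := (e₁.trans e₂).trans (e₃.trans e₄)
  have hF : MeasurePreserving F := by
    have h₁ : MeasurePreserving e₁ :=
      (MeasurePreserving.id volume).prod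
        (EuclideanSpace.volume_preserving_symm_measurableEquiv_toLp (Fin m))
    have h₂ : MeasurePreserving e₂ :=
      (volume_preserving_piFinSuccAbove (fun _ : Fin (m+1) => ℝ) 0).symm
    have h₃ : MeasurePreserving e₃ :=
      (EuclideanSpace.volume_preserving_symm_measurableEquiv_toLp (Fin (m+1))).symm
    have h₄ : MeasurePreserving e₄ := b.repr.symm.measurePreserving
    exact (h₄.comp h₃).comp (h₂.comp h₁)
  have hFval : ∀ x : ℝ × EuclideanSpace ℝ (Fin m),
      F x = b.repr.symm ((MeasurableEquiv.toLp 2 (Fin (m+1) → ℝ))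
        (Fin.insertNth 0 x.1 (fun j => x.2 j))) := by
    intro x
    rfl
  have hFn : ∀ x : ℝ × EuclideanSpace ℝ (Fin m), ‖F x‖^2 = x.1^2 + ‖x.2‖^2 := by
    intro x
    rw [hFval, LinearIsometryEquiv.norm_map]
    rw [EuclideanSpace.norm_eq, Real.sq_sqrt (by positivity)]
    rw [EuclideanSpace.norm_eq, Real.sq_sqrt (by positivity)]
    rw [Fin.sum_univ_succAbove _ 0]
    simp [MeasurableEquiv.coe_toLp, Real.norm_eq_abs, sq_abs]
  have hFi : ∀ x : ℝ × EuclideanSpace ℝ (Fin m), ⟪k, F x⟫ = ‖k‖ * x.1 := by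
    intro x
    rw [hFval]
    have hkk : k = ‖k‖ • b 0 := by rw [hb0, smul_inv_smul₀ hknorm]
    rw [← b.repr.inner_map_map k, hkk, b.repr.apply_symm_apply,
      _root_.map_smul, b.repr_self, real_inner_smul_left,
      EuclideanSpace.inner_single_left]
    simp [MeasurableEquiv.coe_toLp, norm_smul, hunit,
      Real.norm_eq_abs, abs_of_nonneg (norm_nonneg k), mul_assoc, hb0]
  have hfin : ((Module.finrank ℝ (EuclideanSpace ℝ (Fin (m+1)))) : ℝ) < 2 * n₁ := by
    rw [finrank_euclideanSpace_fin]
    push_cast at hn₁ ⊢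
    linarith
  have hexp : -(2 * n₁) / 2 = -n₁ := by ring
  have hint : Integrable
      (fun p : EuclideanSpace ℝ (Fin (m+1)) => (μ (‖p‖^2) : ℂ) * g ⟪k, p⟫) := by
    have hmeas : AEStronglyMeasurable
        (fun p : EuclideanSpace ℝ (Fin (m+1)) => (μ (‖p‖^2) : ℂ) * g ⟪k, p⟫) volume := by
      apply Measurable.aestronglyMeasurable
      exact (Complex.measurable_ofReal.comp
          (hcont.measurable.comp (continuous_norm.pow 2).measurable)).mul
        (hg.comp (Continuous.measurable (continuous_const.inner continuous_id)))
    have hmaj : Integrable (fun p : EuclideanSpace ℝ (Fin (m+1)) =>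
        ((1:ℝ) + ‖p‖^2) ^ (-(2*n₁)/2) * (C * M)) :=
      (integrable_rpow_neg_one_add_norm_sq hfin).mul_const _
    refine hmaj.mono' hmeas (Filter.Eventually.of_forall fun p => ?_)
    rw [norm_mul, Complex.norm_real, hexp]
    have h1 : |μ (‖p‖^2)| ≤ C * (1 + ‖p‖^2) ^ (-n₁) := hdecay _ (by positivity)
    have h2 : ‖g ⟪k, p⟫‖ ≤ M := hM _
    have h3 : (0:ℝ) ≤ C * (1 + ‖p‖^2) ^ (-n₁) := le_trans (abs_nonneg _) h1
    calc |μ (‖p‖^2)| * ‖g ⟪k, p⟫‖ ≤ (C * (1 + ‖p‖^2) ^ (-n₁)) * M :=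
          mul_le_mul h1 h2 (norm_nonneg _) h3
      _ = ((1:ℝ) + ‖p‖^2) ^ (-n₁) * (C * M) := by ring
  refine ⟨hint, ?_⟩
  rw [← hF.integral_comp F.measurableEmbedding
    (fun p => (μ (‖p‖^2) : ℂ) * g ⟪k, p⟫)]
  have hint2 : Integrable
      (fun x : ℝ × EuclideanSpace ℝ (Fin m) => (μ (x.1^2 + ‖x.2‖^2) : ℂ) * g (‖k‖ * x.1))
      (volume.prod volume) := by
    have h' : Integrable (fun x : ℝ × EuclideanSpace ℝ (Fin m) =>
        (μ (‖F x‖^2) : ℂ) * g ⟪k, F x⟫) volume :=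
      (hF.integrable_comp_emb F.measurableEmbedding).2 hint
    rw [MeasureTheory.Measure.volume_eq_prod ℝ (EuclideanSpace ℝ (Fin m))] at h'
    exact h'.congr (Filter.Eventually.of_forall fun x => by simp only [hFn, hFi])
  have heq : (∫ x : ℝ × EuclideanSpace ℝ (Fin m), (μ (‖F x‖^2) : ℂ) * g ⟪k, F x⟫)
      = ∫ x : ℝ × EuclideanSpace ℝ (Fin m),
          (μ (x.1^2 + ‖x.2‖^2) : ℂ) * g (‖k‖ * x.1) := by
    exact integral_congr_ae (Filter.Eventually.of_forall fun x => by simp only [hFn, hFi])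
  rw [heq, MeasureTheory.Measure.volume_eq_prod ℝ (EuclideanSpace ℝ (Fin m)), integral_prod _ hint2]
  refine integral_congr_ae (Filter.Eventually.of_forall fun u => ?_)
  show (∫ w : EuclideanSpace ℝ (Fin m), (μ (u^2 + ‖w‖^2) : ℂ) * g (‖k‖ * u))
      = (phiMarg (m+1) μ u : ℂ) * g (‖k‖ * u)
  rw [integral_mul_const]
  congr 1
  exact integral_ofReal

theorem stmt3 (d : ℕ) (hd : 2 ≤ d) (μ : ℝ → ℝ) (C n₁ : ℝ)
    (hcont : Continuous μ)
    (hn₁ : (d : ℝ) / 2 + 1 < n₁)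
    (hdecay : ∀ e : ℝ, 0 ≤ e → |μ e| ≤ C * (1 + e) ^ (-n₁))
    (k : EuclideanSpace ℝ (Fin d)) (hk : k ≠ 0)
    (lam : ℂ) (hlam : 0 < lam.re) :
    Complex.I * (∫ p : EuclideanSpace ℝ (Fin d),
      ((μ (‖p‖ ^ 2) - μ (‖k - p‖ ^ 2) : ℝ) : ℂ) /
        (lam - 2 * Complex.I * (⟪k, p⟫ : ℂ) + Complex.I * (‖k‖ : ℂ) ^ 2)) =
    (1 / (2 * (‖k‖ : ℂ))) *
      (Hcauchy (phiMarg d μ) ((-Complex.I * lam + (‖k‖ : ℂ) ^ 2) / (2 * (‖k‖ : ℂ))) -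
       Hcauchy (phiMarg d μ) ((-Complex.I * lam - (‖k‖ : ℂ) ^ 2) / (2 * (‖k‖ : ℂ)))) := by
  obtain ⟨m, rfl⟩ : ∃ m, d = m + 1 := ⟨d - 1, by omega⟩
  have hknorm : ‖k‖ ≠ 0 := norm_ne_zero_iff.2 hk
  have hkpos : (0:ℝ) < ‖k‖ := norm_pos_iff.2 hk
  have hK0 : ((‖k‖ : ℝ) : ℂ) ≠ 0 := by exact_mod_cast hknorm
  have hI : Complex.I ≠ 0 := Complex.I_ne_zero
  set gp : ℝ → ℂ := fun t =>
    (lam - 2 * Complex.I * (t:ℂ) + Complex.I * (‖k‖:ℂ)^2)⁻¹ with hgp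
  set gm : ℝ → ℂ := fun t =>
    (lam + 2 * Complex.I * (t:ℂ) - Complex.I * (‖k‖:ℂ)^2)⁻¹ with hgm
  -- real parts of the denominators
  have hrep : ∀ t : ℝ, (lam - 2*Complex.I*(t:ℂ) + Complex.I*(‖k‖:ℂ)^2).re = lam.re := by
    intro t; simp [← Complex.ofReal_pow]
  have hrem : ∀ t : ℝ, (lam + 2*Complex.I*(t:ℂ) - Complex.I*(‖k‖:ℂ)^2).re = lam.re := by
    intro t; simp [← Complex.ofReal_pow]
  have hbound : ∀ z : ℂ, z.re = lam.re → ‖z⁻¹‖ ≤ (lam.re)⁻¹ := by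
    intro z hz
    rw [norm_inv]
    refine inv_anti₀ hlam ?_
    calc lam.re = z.re := hz.symm
      _ ≤ |z.re| := le_abs_self _
      _ ≤ ‖z‖ := Complex.abs_re_le_norm z
  have hnep : ∀ t : ℝ, (lam - 2*Complex.I*(t:ℂ) + Complex.I*(‖k‖:ℂ)^2) ≠ 0 := by
    intro t h
    have := hrep t
    rw [h] at this
    simp at this
    linarith
  have hnem : ∀ t : ℝ, (lam + 2*Complex.I*(t:ℂ) - Complex.I*(‖k‖:ℂ)^2) ≠ 0 := by
    intro t h
    have := hrem t
    rw [h] at this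
    simp at this
    linarith
  have hgpc : Continuous gp := by
    rw [hgp]
    exact Continuous.inv₀ (by continuity) hnep
  have hgmc : Continuous gm := by
    rw [hgm]
    exact Continuous.inv₀ (by continuity) hnem
  have hMp : ∀ t : ℝ, ‖gp t‖ ≤ (lam.re)⁻¹ := fun t => hbound _ (hrep t)
  have hMm : ∀ t : ℝ, ‖gm t‖ ≤ (lam.re)⁻¹ := fun t => hbound _ (hrem t)
  obtain ⟨hintp, heqp⟩ := key m μ C n₁ hcont hn₁ hdecay k hk gp hgpc.measurable _ hMp
  obtain ⟨hintm, heqm⟩ := key m μ C n₁ hcont hn₁ hdecay k hk gm hgmc.measurable _ hMm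
  -- second piece via the substitution p ↦ k - p
  have hGm_eq : ∀ p : EuclideanSpace ℝ (Fin (m+1)),
      (fun q : EuclideanSpace ℝ (Fin (m+1)) => (μ (‖q‖^2):ℂ) * gm ⟪k,q⟫) (k - p)
        = (μ (‖k-p‖^2):ℂ) * gp ⟪k,p⟫ := by
    intro p
    simp only
    rw [inner_sub_right, real_inner_self_eq_norm_sq]
    congr 1
    rw [hgm, hgp]
    simp only
    congr 1
    push_cast
    ring
  have hsub : MeasurePreserving (fun p : EuclideanSpace ℝ (Fin (m+1)) => k - p)
      volume volume := Measure.measurePreserving_sub_left volume k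
  have hsubemb : MeasurableEmbedding (fun p : EuclideanSpace ℝ (Fin (m+1)) => k - p) :=
    (MeasurableEquiv.subLeft k).measurableEmbedding
  have hintm' : Integrable
      (fun p : EuclideanSpace ℝ (Fin (m+1)) => (μ (‖k-p‖^2):ℂ) * gp ⟪k,p⟫) := by
    have h := (hsub.integrable_comp_emb hsubemb).2 hintm
    exact h.congr (Filter.Eventually.of_forall hGm_eq)
  have heqm' : (∫ p : EuclideanSpace ℝ (Fin (m+1)), (μ (‖k-p‖^2):ℂ) * gp ⟪k,p⟫)
      = ∫ u : ℝ, (phiMarg (m+1) μ u : ℂ) * gm (‖k‖ * u) := by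
    rw [← heqm, ← integral_sub_left_eq_self
      (fun q : EuclideanSpace ℝ (Fin (m+1)) => (μ (‖q‖^2):ℂ) * gm ⟪k,q⟫) volume k]
    exact integral_congr_ae (Filter.Eventually.of_forall fun p => (hGm_eq p).symm)
  -- split the integral
  have hsplit : ∀ p : EuclideanSpace ℝ (Fin (m+1)),
      ((μ (‖p‖ ^ 2) - μ (‖k - p‖ ^ 2) : ℝ) : ℂ) /
        (lam - 2 * Complex.I * (⟪k, p⟫ : ℂ) + Complex.I * (‖k‖ : ℂ) ^ 2)
      = (μ (‖p‖^2):ℂ) * gp ⟪k,p⟫ - (μ (‖k-p‖^2):ℂ) * gp ⟪k,p⟫ := by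
    intro p
    rw [hgp]
    simp only
    push_cast
    rw [div_eq_mul_inv, sub_mul]
  rw [integral_congr_ae (Filter.Eventually.of_forall hsplit),
    integral_sub hintp hintm', heqp, heqm', mul_sub, mul_sub]
  -- the two one-dimensional integrals
  have imne : ∀ z : ℂ, z.im ≠ 0 → ∀ u : ℝ, z - (u:ℂ) ≠ 0 := by
    intro z hz u h
    apply hz
    have := congrArg Complex.im h
    simpa using this
  have h2K : (2*(‖k‖:ℂ)) = ((2*‖k‖ : ℝ):ℂ) := by push_cast; ring
  have hzpim : ((-Complex.I * lam + (‖k‖:ℂ)^2) / (2*(‖k‖:ℂ))).im ≠ 0 := by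
    rw [h2K, Complex.div_ofReal_im]
    have him : (-Complex.I * lam + (‖k‖:ℂ)^2).im = -lam.re := by
      simp [← Complex.ofReal_pow, Complex.I_mul_im]
    rw [him]
    exact div_ne_zero (by linarith) (by positivity)
  have hzmim : ((-Complex.I * lam - (‖k‖:ℂ)^2) / (2*(‖k‖:ℂ))).im ≠ 0 := by
    rw [h2K, Complex.div_ofReal_im]
    have him : (-Complex.I * lam - (‖k‖:ℂ)^2).im = -lam.re := by
      simp [← Complex.ofReal_pow, Complex.I_mul_im]
    rw [him]
    exact div_ne_zero (by linarith) (by positivity)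
  have hplus : Complex.I * ∫ u:ℝ, (phiMarg (m+1) μ u : ℂ) * gp (‖k‖ * u)
      = (1/(2*(‖k‖:ℂ))) * Hcauchy (phiMarg (m+1) μ)
          ((-Complex.I * lam + (‖k‖:ℂ)^2) / (2*(‖k‖:ℂ))) := by
    rw [Hcauchy, ← integral_const_mul, ← integral_const_mul]
    refine integral_congr_ae (Filter.Eventually.of_forall fun u => ?_)
    obtain ⟨z, hzdef⟩ : ∃ z : ℂ, z = (-Complex.I * lam + (‖k‖:ℂ)^2) / (2*(‖k‖:ℂ)) := ⟨_, rfl⟩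
    rw [← hzdef]
    have hz : z - (u:ℂ) ≠ 0 := imne z (hzdef ▸ hzpim) u
    have hden : lam - 2*Complex.I*((‖k‖ * u : ℝ):ℂ) + Complex.I*(‖k‖:ℂ)^2
        = Complex.I * (2*(‖k‖:ℂ)) * (z - u) := by
      have h1 : (2*(‖k‖:ℂ)) * z = -Complex.I * lam + (‖k‖:ℂ)^2 := by
        rw [hzdef]; field_simp
      push_cast
      linear_combination (-Complex.I) * h1 + lam * Complex.I_sq
    rw [hgp]
    simp only
    rw [hden]
    field_simp
  have hminus : Complex.I * ∫ u:ℝ, (phiMarg (m+1) μ u : ℂ) * gm (‖k‖ * u)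
      = (1/(2*(‖k‖:ℂ))) * Hcauchy (phiMarg (m+1) μ)
          ((-Complex.I * lam - (‖k‖:ℂ)^2) / (2*(‖k‖:ℂ))) := by
    rw [show (∫ u:ℝ, (phiMarg (m+1) μ u : ℂ) * gm (‖k‖ * u))
        = ∫ u:ℝ, (phiMarg (m+1) μ (-u) : ℂ) * gm (‖k‖ * (-u)) from
      (integral_neg_eq_self (fun u : ℝ => (phiMarg (m+1) μ u : ℂ) * gm (‖k‖ * u)) volume).symm]
    rw [Hcauchy, ← integral_const_mul, ← integral_const_mul]
    refine integral_congr_ae (Filter.Eventually.of_forall fun u => ?_)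
    obtain ⟨z, hzdef⟩ : ∃ z : ℂ, z = (-Complex.I * lam - (‖k‖:ℂ)^2) / (2*(‖k‖:ℂ)) := ⟨_, rfl⟩
    rw [← hzdef]
    have hz : z - (u:ℂ) ≠ 0 := imne z (hzdef ▸ hzmim) u
    have hphi : phiMarg (m+1) μ (-u) = phiMarg (m+1) μ u := by
      simp only [phiMarg, neg_sq]
    have hden : lam + 2*Complex.I*((‖k‖ * (-u) : ℝ):ℂ) - Complex.I*(‖k‖:ℂ)^2
        = Complex.I * (2*(‖k‖:ℂ)) * (z - u) := by
      have h1 : (2*(‖k‖:ℂ)) * z = -Complex.I * lam - (‖k‖:ℂ)^2 := by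
        rw [hzdef]; field_simp
      push_cast
      linear_combination (-Complex.I) * h1 + lam * Complex.I_sq
    rw [hgm]
    simp only
    rw [hphi, hden]
    field_simp
  rw [← hplus, ← hminus]
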